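/- The function f₂₃(r) = 2·(1-r²)·(artanh(r)/r)·K(r) + [(r - (1-r²)·artanh(r))/r³]·E(r) is strictly decreasing on (0,1), with limits 4π/3 as r→0⁺ and 1 as r→1⁻. -/

import Mathlib

set_option maxHeartbeats 1000000

open Real Set Filter Topology intervalIntegral MeasureTheory

noncomputable def artanh (r : ℝ) : ℝ := (1/2) * Real.log ((1+r)/(1-r))

noncomputable def ellipticK (r : ℝ) : ℝ :=
  ∫ t in (0:ℝ)..(π/2), (1 - r^2 * Real.sin t ^ 2) ^ (-(1/2) : ℝ)

noncomputable def ellipticE (r : ℝ) : ℝ :=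
  ∫ t in (0:ℝ)..(π/2), (1 - r^2 * Real.sin t ^ 2) ^ ((1/2) : ℝ)

lemma artanh_zero : _root_.artanh 0 = 0 := by simp [_root_.artanh]

lemma artanh_hasDerivAt {r : ℝ} (h1 : -1 < r) (h2 : r < 1) :
    HasDerivAt _root_.artanh (1/(1-r^2)) r := by
  have hne : (1 - r : ℝ) ≠ 0 := by linarith
  have hpos : (0:ℝ) < (1+r)/(1-r) := by apply div_pos <;> linarith
  have hq : HasDerivAt (fun r : ℝ => (1+r)/(1-r)) ((1*(1-r) - (1+r)*(-1))/(1-r)^2) r := by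
    exact (HasDerivAt.const_add 1 (hasDerivAt_id r)).div
      ((hasDerivAt_id r).const_sub 1) hne
  have hlog := (Real.hasDerivAt_log hpos.ne').comp r hq
  have := hlog.const_mul (1/2 : ℝ)
  refine this.congr_deriv ?_
  have h3 : (1:ℝ) - r^2 ≠ 0 := by nlinarith
  have h4 : (1+r:ℝ) ≠ 0 := by linarith
  field_simp
  ring

lemma artanh_continuousOn : ContinuousOn _root_.artanh (Ico 0 1) := by
  intro x hx
  exact ((artanh_hasDerivAt (by linarith [hx.1]) hx.2).continuousAt).continuousWithinAt

lemma pos_of_deriv_pos {F F' : ℝ → ℝ} (h0 : F 0 = 0)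
    (hc : ContinuousOn F (Ico 0 1))
    (hD : ∀ x ∈ Ioo 0 1, HasDerivAt F (F' x) x)
    (hpos : ∀ x ∈ Ioo 0 1, 0 < F' x) : ∀ x ∈ Ioo 0 1, 0 < F x := by
  have hint : interior (Ico (0:ℝ) 1) = Ioo 0 1 := interior_Ico
  have hm : StrictMonoOn F (Ico 0 1) := by
    apply strictMonoOn_of_hasDerivWithinAt_pos (convex_Ico 0 1) hc
    · intro x hx
      rw [hint] at hx ⊢
      exact ((hD x hx).hasDerivWithinAt)
    · intro x hx; rw [hint] at hx; exact hpos x hx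
  intro x hx
  have := hm (by constructor <;> norm_num) (⟨hx.1.le, hx.2⟩ : x ∈ Ico 0 1) hx.1
  rwa [h0] at this

lemma artanh_gt_self : ∀ x ∈ Ioo (0:ℝ) 1, x < _root_.artanh x := by
  have h := pos_of_deriv_pos (F := fun x => _root_.artanh x - x) (F' := fun x => 1/(1-x^2) - 1)
    (by simp [_root_.artanh_zero]) (artanh_continuousOn.sub (continuous_id.continuousOn))
    (fun x hx => ((artanh_hasDerivAt (by linarith [hx.1]) hx.2).sub (hasDerivAt_id x)))
    (fun x hx => by
      have h1 : (0:ℝ) < 1 - x^2 := by nlinarith [hx.1, hx.2]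
      have hh : (1:ℝ)/(1-x^2) - 1 = x^2/(1-x^2) := by field_simp; ring
      rw [hh]
      have := hx.1
      positivity)
  intro x hx; have := h x hx; linarith

lemma artanh_pos : ∀ x ∈ Ioo (0:ℝ) 1, 0 < _root_.artanh x :=
  fun x hx => lt_trans hx.1 (artanh_gt_self x hx)

lemma artanh_ineq1 : ∀ x ∈ Ioo (0:ℝ) 1, (1-x^2) * _root_.artanh x < x := by
  have h := pos_of_deriv_pos (F := fun x => x - (1-x^2) * _root_.artanh x)
    (F' := fun x => 2*x*_root_.artanh x)
    (by simp [_root_.artanh_zero])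
    ((continuous_id.continuousOn).sub ((by fun_prop : ContinuousOn (fun x:ℝ => 1-x^2) _).mul artanh_continuousOn))
    (fun x hx => by
      have h1 : (0:ℝ) < 1 - x^2 := by nlinarith [hx.1, hx.2]
      have hd := (hasDerivAt_id x).sub
        ((((hasDerivAt_id x).pow 2).const_sub 1).mul (artanh_hasDerivAt (by linarith [hx.1]) hx.2))
      refine hd.congr_deriv ?_
      simp only [id_eq, Pi.pow_apply, Pi.sub_apply, Pi.mul_apply, Nat.cast_ofNat, Nat.reduceSub]
      field_simp
      ring)
    (fun x hx => by
      have hu := artanh_pos x hx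
      have := hx.1
      positivity)
  intro x hx; have := h x hx; linarith

lemma artanh_ineq2 : ∀ x ∈ Ioo (0:ℝ) 1, (3-5*x^2) * _root_.artanh x < 3*x - 4*x^3 := by
  have h := pos_of_deriv_pos (F := fun x => 3*x - 4*x^3 - (3-5*x^2) * _root_.artanh x)
    (F' := fun x => (12*x^4 - 10*x^2 + 10*x*_root_.artanh x*(1-x^2))/(1-x^2))
    (by simp [_root_.artanh_zero])
    (ContinuousOn.sub (by fun_prop) ((by fun_prop : ContinuousOn (fun x:ℝ => 3-5*x^2) _).mul artanh_continuousOn))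
    (fun x hx => by
      have h1 : (0:ℝ) < 1 - x^2 := by nlinarith [hx.1, hx.2]
      have hd := (((hasDerivAt_id x).const_mul 3).sub (((hasDerivAt_id x).pow 3).const_mul 4)).sub
        (((((hasDerivAt_id x).pow 2).const_mul 5).const_sub 3).mul (artanh_hasDerivAt (by linarith [hx.1]) hx.2))
      refine hd.congr_deriv ?_
      simp only [id_eq, Pi.pow_apply, Pi.sub_apply, Pi.mul_apply, Nat.cast_ofNat, Nat.reduceSub]
      field_simp
      ring)
    (fun x hx => by
      have h1 : (0:ℝ) < 1 - x^2 := by nlinarith [hx.1, hx.2]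
      have hu := artanh_gt_self x hx
      apply div_pos _ h1
      nlinarith [hx.1, mul_pos hx.1 h1])
  intro x hx; have := h x hx; linarith

lemma artanh_ineq3 : ∀ x ∈ Ioo (0:ℝ) 1, (3-3*x^2-2*x^4) * _root_.artanh x < 3*x - 2*x^3 := by
  have h := pos_of_deriv_pos (F := fun x => 3*x - 2*x^3 - (3-3*x^2-2*x^4) * _root_.artanh x)
    (F' := fun x => (2*x^4 + (6*x+8*x^3)*_root_.artanh x*(1-x^2) - 6*x^2*(1-x^2))/(1-x^2))
    (by simp [_root_.artanh_zero])
    (ContinuousOn.sub (by fun_prop) ((by fun_prop : ContinuousOn (fun x:ℝ => 3-3*x^2-2*x^4) _).mul artanh_continuousOn))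
    (fun x hx => by
      have h1 : (0:ℝ) < 1 - x^2 := by nlinarith [hx.1, hx.2]
      have hd := (((hasDerivAt_id x).const_mul 3).sub (((hasDerivAt_id x).pow 3).const_mul 2)).sub
        (((((hasDerivAt_id x).pow 2).const_mul 3).const_sub 3).sub (((hasDerivAt_id x).pow 4).const_mul 2)
          |>.mul (artanh_hasDerivAt (by linarith [hx.1]) hx.2))
      refine hd.congr_deriv ?_
      simp only [id_eq, Pi.pow_apply, Pi.sub_apply, Pi.mul_apply, Nat.cast_ofNat, Nat.reduceSub]
      field_simp
      ring)
    (fun x hx => by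
      have h1 : (0:ℝ) < 1 - x^2 := by nlinarith [hx.1, hx.2]
      have hu := artanh_gt_self x hx
      apply div_pos _ h1
      have hp : 0 ≤ (_root_.artanh x - x)*((6*x+8*x^3)*(1-x^2)) := by
        apply mul_nonneg (by linarith)
        apply mul_nonneg _ h1.le
        nlinarith [hx.1]
      nlinarith [hp, pow_pos hx.1 4, sq_nonneg x, mul_pos (pow_pos hx.1 4) h1])
  intro x hx; have := h x hx; linarith

lemma psi1 : ∀ x ∈ Ioo (0:ℝ) 1, 2/3*x^3 ≤ x - (1-x^2)*_root_.artanh x := by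
  have h := pos_of_deriv_pos (F := fun x => x - (1-x^2)*_root_.artanh x - 2/3*x^3)
    (F' := fun x => 2*x*_root_.artanh x - 2*x^2)
    (by simp [_root_.artanh_zero])
    (ContinuousOn.sub (ContinuousOn.sub (continuous_id.continuousOn)
      ((by fun_prop : ContinuousOn (fun x:ℝ => 1-x^2) _).mul artanh_continuousOn)) (by fun_prop))
    (fun x hx => by
      have h1 : (0:ℝ) < 1 - x^2 := by nlinarith [hx.1, hx.2]
      have hd := ((hasDerivAt_id x).sub
        ((((hasDerivAt_id x).pow 2).const_sub 1).mul (artanh_hasDerivAt (by linarith [hx.1]) hx.2))).sub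
        (((hasDerivAt_id x).pow 3).const_mul (2/3))
      refine hd.congr_deriv ?_
      simp only [id_eq, Pi.pow_apply, Pi.sub_apply, Pi.mul_apply, Nat.cast_ofNat, Nat.reduceSub]
      field_simp
      ring)
    (fun x hx => by
      have hu := artanh_gt_self x hx
      nlinarith [hx.1])
  intro x hx; have := h x hx; linarith

lemma psi2 : ∀ x ∈ Ioo (0:ℝ) 1, (1-x^2)*(x - (1-x^2)*_root_.artanh x) ≤ 2/3*x^3 := by
  have h := pos_of_deriv_pos (F := fun x => 2/3*x^3 - (1-x^2)*x + (1-x^2)^2*_root_.artanh x)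
    (F' := fun x => 4*x*(x - (1-x^2)*_root_.artanh x))
    (by simp [_root_.artanh_zero])
    (by
      apply ContinuousOn.add (by fun_prop)
      exact (by fun_prop : ContinuousOn (fun x:ℝ => (1-x^2)^2) _).mul artanh_continuousOn)
    (fun x hx => by
      have h1 : (0:ℝ) < 1 - x^2 := by nlinarith [hx.1, hx.2]
      have hd := ((((hasDerivAt_id x).pow 3).const_mul (2/3)).sub
        ((((hasDerivAt_id x).pow 2).const_sub 1).mul (hasDerivAt_id x))).add
        (((((hasDerivAt_id x).pow 2).const_sub 1).pow 2).mul (artanh_hasDerivAt (by linarith [hx.1]) hx.2))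
      refine hd.congr_deriv ?_
      simp only [id_eq, Pi.pow_apply, Pi.sub_apply, Pi.mul_apply, Nat.cast_ofNat, Nat.reduceSub]
      field_simp
      ring)
    (fun x hx => by
      have hi := artanh_ineq1 x hx
      nlinarith [hx.1])
  intro x hx; have := h x hx; nlinarith

lemma tendsto_artanh_div : Tendsto (fun r => _root_.artanh r / r) (𝓝[>] 0) (𝓝 1) := by
  have h2 := hasDerivAt_iff_tendsto_slope.mp (artanh_hasDerivAt (by norm_num : (-1:ℝ) < 0) (by norm_num))
  norm_num at h2
  have h3 : Tendsto (slope _root_.artanh 0) (𝓝[>] 0) (𝓝 1) :=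
    h2.mono_left (nhdsWithin_mono _ (fun x hx => ne_of_gt hx))
  apply h3.congr'
  filter_upwards [self_mem_nhdsWithin] with r hr
  simp [slope_def_field, _root_.artanh_zero]

lemma tendsto_one_sub_sq_artanh : Tendsto (fun r => (1-r^2) * _root_.artanh r) (𝓝[<] 1) (𝓝 0) := by
  have hmap : Tendsto (fun r : ℝ => 1 - r) (𝓝[<] 1) (𝓝[>] 0) := by
    apply tendsto_nhdsWithin_of_tendsto_nhds_of_eventually_within
    · have h : Tendsto (fun r : ℝ => 1 - r) (𝓝 1) (𝓝 0) := by
        have := Continuous.tendsto (by fun_prop : Continuous fun r:ℝ => 1 - r) 1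
        simpa using this
      exact h.mono_left nhdsWithin_le_nhds
    · filter_upwards [self_mem_nhdsWithin] with r hr
      simp only [mem_Iio] at hr; simp [hr]
  have hyl : Tendsto (fun y : ℝ => Real.log y * y) (𝓝[>] 0) (𝓝 0) := by
    have := tendsto_log_mul_rpow_nhdsGT_zero (zero_lt_one)
    apply this.congr'
    filter_upwards [self_mem_nhdsWithin] with y hy
    rw [Real.rpow_one]
  have hT2 : Tendsto (fun r : ℝ => Real.log (1-r) * (1-r)) (𝓝[<] 1) (𝓝 0) := hyl.comp hmap
  -- (1-r^2) * _root_.artanh r = (1/2)*(1-r^2)*log(1+r) - (1/2)*(1+r)*(log(1-r)*(1-r))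
  have key : ∀ r ∈ Ioo (0:ℝ) 1, (1-r^2) * _root_.artanh r
      = (1/2)*((1-r^2)*Real.log (1+r)) - (1/2)*((1+r)*(Real.log (1-r)*(1-r))) := by
    intro r hr
    obtain ⟨h0, h1⟩ := hr
    simp only [_root_.artanh]
    rw [Real.log_div (by linarith) (by intro h; have : (1:ℝ) - r = 0 := h; linarith)]
    ring
  have hplus : Tendsto (fun r : ℝ => 1+r) (𝓝 1) (𝓝 2) := by
    have := Continuous.tendsto (by fun_prop : Continuous fun r:ℝ => 1+r) 1
    simpa [one_add_one_eq_two] using this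
  have hb : Tendsto (fun r : ℝ => Real.log (1+r)) (𝓝 1) (𝓝 (Real.log 2)) :=
    (Real.continuousAt_log (by norm_num)).tendsto.comp hplus
  have ha : Tendsto (fun r : ℝ => (1-r^2:ℝ)) (𝓝 1) (𝓝 0) := by
    have := Continuous.tendsto (by fun_prop : Continuous fun r:ℝ => 1-r^2) 1
    simpa using this
  have hT1 : Tendsto (fun r : ℝ => (1/2)*((1-r^2)*Real.log (1+r))) (𝓝[<] 1) (𝓝 0) := by
    have := ((ha.mul hb).const_mul (1/2:ℝ)).mono_left (nhdsWithin_le_nhds (s := Iio (1:ℝ)))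
    simpa using this
  have hT3 : Tendsto (fun r : ℝ => (1/2)*((1+r)*(Real.log (1-r)*(1-r)))) (𝓝[<] 1) (𝓝 0) := by
    have := (((hplus.mono_left (nhdsWithin_le_nhds (s := Iio (1:ℝ)))).mul hT2).const_mul (1/2:ℝ))
    simpa using this
  have := hT1.sub hT3
  rw [sub_zero] at this
  apply this.congr'
  filter_upwards [Ioo_mem_nhdsLT_of_mem (by norm_num : (1:ℝ) ∈ Ioc 0 1)] with r hr
  exact (key r hr).symm

noncomputable def gg (r t : ℝ) : ℝ :=
  2 * (1 - r^2) * (_root_.artanh r / r) * (1 - r^2 * Real.sin t ^ 2) ^ (-(1/2):ℝ) +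
    ((r - (1 - r^2) * _root_.artanh r) / r^3) * (1 - r^2 * Real.sin t ^ 2) ^ ((1/2):ℝ)

lemma gg_deriv_neg (t : ℝ) {r : ℝ} (hr : r ∈ Ioo (0:ℝ) 1) :
    ∃ D, HasDerivAt (fun ρ => gg ρ t) D r ∧ D < 0 := by
  obtain ⟨hr0, hr1⟩ := hr
  set x : ℝ := Real.sin t with hxdef
  have hx2 : x^2 ≤ 1 := Real.sin_sq_le_one t
  have h1r : (0:ℝ) < 1 - r^2 := by nlinarith
  have hs : (0:ℝ) < 1 - r^2 * x^2 := by nlinarith [sq_nonneg x]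
  set u : ℝ := _root_.artanh r with hudef
  set s : ℝ := 1 - r^2 * x^2 with hsdef
  -- derivative components
  have hu' : HasDerivAt _root_.artanh (1/(1-r^2)) r := artanh_hasDerivAt (by linarith) hr1
  have h1 : HasDerivAt (fun ρ : ℝ => 1 - ρ^2) (-(2*r)) r := by
    have := (hasDerivAt_pow 2 r).const_sub 1
    refine this.congr_deriv ?_
    · norm_num
  have hq : HasDerivAt (fun ρ => _root_.artanh ρ / ρ) ((1/(1-r^2) * r - _root_.artanh r * 1)/r^2) r :=
    hu'.div (hasDerivAt_id r) hr0.ne'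
  have hA : HasDerivAt (fun ρ : ℝ => 2*(1-ρ^2)) (2*(-(2*r))) r := h1.const_mul 2
  have hc1 := hA.mul hq
  have hs' : HasDerivAt (fun ρ : ℝ => 1 - ρ^2*x^2) (-(2*r*x^2)) r := by
    have := ((hasDerivAt_pow 2 r).mul_const (x^2)).const_sub 1
    refine this.congr_deriv ?_; simp
  have hS1 : HasDerivAt (fun ρ : ℝ => (1-ρ^2*x^2) ^ (-(1/2):ℝ))
      (-(2*r*x^2) * (-(1/2)) * s ^ ((-(1/2):ℝ) - 1)) r := hs'.rpow_const (Or.inl hs.ne')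
  have hS2 : HasDerivAt (fun ρ : ℝ => (1-ρ^2*x^2) ^ ((1/2):ℝ))
      (-(2*r*x^2) * ((1/2)) * s ^ (((1/2):ℝ) - 1)) r := hs'.rpow_const (Or.inl hs.ne')
  have hn : HasDerivAt (fun ρ : ℝ => ρ - (1-ρ^2)*_root_.artanh ρ)
      (1 - ((-(2*r))*_root_.artanh r + (1-r^2)*(1/(1-r^2)))) r := (hasDerivAt_id r).sub (h1.mul hu')
  have hd3 : HasDerivAt (fun ρ : ℝ => ρ^3) (3*r^2) r := by
    have := hasDerivAt_pow 3 r
    norm_num at this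
    convert this using 1
  have hr3 : r^3 ≠ 0 := pow_ne_zero 3 hr0.ne'
  have hc2 := hn.div hd3 hr3
  have htot := (hc1.mul hS1).add (hc2.mul hS2)
  have hgg : (fun ρ => gg ρ t) = fun ρ =>
      2 * (1 - ρ^2) * (_root_.artanh ρ / ρ) * (1 - ρ^2 * x ^ 2) ^ (-(1/2):ℝ) +
      ((ρ - (1 - ρ^2) * _root_.artanh ρ) / ρ^3) * (1 - ρ^2 * x ^ 2) ^ ((1/2):ℝ) := rfl
  refine ⟨_, htot, ?_⟩
  -- rewrite rpow's
  have e1' : s ^ (-(1/2):ℝ) = s ^ ((1/2):ℝ) / s := by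
    rw [eq_div_iff hs.ne']
    nth_rewrite 2 [← Real.rpow_one s]
    rw [← Real.rpow_add hs]; norm_num
  have e2' : s ^ ((-(1/2):ℝ) - 1) = s ^ ((1/2):ℝ) / s^2 := by
    rw [eq_div_iff (pow_ne_zero 2 hs.ne')]
    rw [← Real.rpow_natCast s 2, ← Real.rpow_add hs]; norm_num
  have e3' : s ^ (((1/2):ℝ) - 1) = s ^ ((1/2):ℝ) / s := by
    rw [eq_div_iff hs.ne']
    nth_rewrite 2 [← Real.rpow_one s]
    rw [← Real.rpow_add hs]; norm_num
  set S : ℝ := s ^ ((1/2):ℝ) with hSdef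
  have hSpos : 0 < S := Real.rpow_pos_of_pos hs _
  rw [e1', e2', e3']
  have hxs : x^2 = (1-s)/r^2 := by rw [hsdef]; field_simp; ring
  rw [hxs]
  have hM : (0:ℝ) < s^2*r^4 := by positivity
  -- P < 0
  have hE1 := artanh_ineq3 r ⟨hr0, hr1⟩
  have hE2 := artanh_ineq2 r ⟨hr0, hr1⟩
  have hugt := artanh_gt_self r ⟨hr0, hr1⟩
  rw [← hudef] at hE1 hE2 hugt
  have hs_ub : s ≤ 1 := by rw [hsdef]; nlinarith [sq_nonneg (r*x)]
  have hs_lb : 1 - r^2 ≤ s := by rw [hsdef]; nlinarith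
  have hPneg : 2*(u-r)*s^2 + ((1-5*r^2)*u + 2*r^3 - r)*s + 2*r^2*(1-r^2)*u < 0 := by
    have h3 : 0 ≤ 2*(u-r)*(1-s)*(s-(1-r^2))*r^2 := by
      apply mul_nonneg (mul_nonneg (mul_nonneg (by linarith) (by linarith)) (by linarith))
      positivity
    rcases lt_or_eq_of_le hs_ub with hlt | heq
    · have ht1 : (1-s)*((1-r^2)*((3-5*r^2)*u - (3*r-4*r^3))) < 0 :=
        mul_neg_of_pos_of_neg (by linarith) (mul_neg_of_pos_of_neg h1r (by linarith))
      have ht2 : 0 ≤ (s-(1-r^2))*((3*r-2*r^3) - (3-3*r^2-2*r^4)*u) :=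
        mul_nonneg (by linarith) (by linarith)
      nlinarith [h3, ht1, ht2, mul_pos hr0 hr0]
    · rw [heq]
      nlinarith [hE1]
  rw [← mul_lt_mul_iff_of_pos_right hM, zero_mul]
  convert mul_neg_of_pos_of_neg hSpos hPneg using 1
  simp only [Pi.mul_apply, Pi.div_apply]
  field_simp
  ring

lemma base_pos {r : ℝ} (hr0 : -1 < r) (hr1 : r < 1) (t : ℝ) : 0 < 1 - r^2 * Real.sin t ^ 2 := by
  nlinarith [Real.sin_sq_le_one t, sq_nonneg (Real.sin t), sq_nonneg r]

lemma cont_rpow {r c : ℝ} (hr0 : -1 < r) (hr1 : r < 1) :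
    Continuous (fun t => (1 - r^2 * Real.sin t ^ 2) ^ (c:ℝ)) := by
  apply Continuous.rpow_const (by fun_prop)
  exact fun t => Or.inl (base_pos hr0 hr1 t).ne'

lemma gg_cont {r : ℝ} (hr0 : -1 < r) (hr1 : r < 1) : Continuous (gg r) := by
  unfold gg
  exact ((continuous_const.mul (cont_rpow hr0 hr1)).add (continuous_const.mul (cont_rpow hr0 hr1)))

lemma gg_strictAntiOn (t : ℝ) : StrictAntiOn (fun r => gg r t) (Ioo 0 1) := by
  apply strictAntiOn_of_deriv_neg (convex_Ioo 0 1)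
  · intro r hr
    obtain ⟨D, hD, _⟩ := gg_deriv_neg t hr
    exact hD.continuousAt.continuousWithinAt
  · intro r hr
    rw [interior_Ioo] at hr
    obtain ⟨D, hD, hneg⟩ := gg_deriv_neg t hr
    rw [hD.deriv]; exact hneg

lemma gg_pos {r : ℝ} (hr : r ∈ Ioo (0:ℝ) 1) (t : ℝ) : 0 < gg r t := by
  obtain ⟨hr0, hr1⟩ := hr
  have h1 : (0:ℝ) < 1 - r^2 := by nlinarith
  have hu := artanh_pos r ⟨hr0, hr1⟩
  have hi := artanh_ineq1 r ⟨hr0, hr1⟩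
  have hb := base_pos (by linarith) hr1 t
  unfold gg
  have p1 : 0 < (1 - r^2 * Real.sin t ^ 2) ^ (-(1/2):ℝ) := Real.rpow_pos_of_pos hb _
  have p2 : 0 < (1 - r^2 * Real.sin t ^ 2) ^ ((1/2):ℝ) := Real.rpow_pos_of_pos hb _
  have c1 : 0 < 2 * (1-r^2) * (_root_.artanh r / r) := by positivity
  have c2 : 0 < (r - (1-r^2) * _root_.artanh r) / r^3 := by
    apply div_pos (by linarith) (by positivity)
  positivity

lemma f_eq {r : ℝ} (hr : r ∈ Ioo (0:ℝ) 1) :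
    2 * (1 - r^2) * (_root_.artanh r / r) * ellipticK r +
      ((r - (1 - r^2) * _root_.artanh r) / r^3) * ellipticE r = ∫ t in (0:ℝ)..(π/2), gg r t := by
  have hr0 : (-1:ℝ) < r := by linarith [hr.1]
  have i1 : IntervalIntegrable (fun t => (1 - r^2 * Real.sin t ^ 2) ^ (-(1/2):ℝ)) MeasureTheory.volume 0 (π/2) :=
    (cont_rpow hr0 hr.2).intervalIntegrable 0 (π/2)
  have i2 : IntervalIntegrable (fun t => (1 - r^2 * Real.sin t ^ 2) ^ ((1/2):ℝ)) MeasureTheory.volume 0 (π/2) :=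
    (cont_rpow hr0 hr.2).intervalIntegrable 0 (π/2)
  unfold ellipticK ellipticE gg
  rw [← intervalIntegral.integral_const_mul, ← intervalIntegral.integral_const_mul,
    ← intervalIntegral.integral_add (i1.const_mul _) (i2.const_mul _)]

lemma tendsto_c2 : Tendsto (fun r => (r - (1-r^2)*_root_.artanh r)/r^3) (𝓝[>] 0) (𝓝 (2/3)) := by
  have hub : Tendsto (fun r : ℝ => (2/3)/(1-r^2)) (𝓝[>] 0) (𝓝 (2/3)) := by
    have h := Continuous.tendsto (by fun_prop : Continuous fun r:ℝ => 1-r^2) 0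
    have h2 : Tendsto (fun r : ℝ => (2/3)/(1-r^2)) (𝓝 0) (𝓝 ((2/3)/(1-0^2))) :=
      (tendsto_const_nhds.div (by simpa using h) (by norm_num))
    norm_num at h2
    exact h2.mono_left nhdsWithin_le_nhds
  apply tendsto_of_tendsto_of_tendsto_of_le_of_le' tendsto_const_nhds hub
  · filter_upwards [Ioo_mem_nhdsGT_of_mem (by norm_num : (0:ℝ) ∈ Ico 0 1)] with r hr
    have h := psi1 r hr
    rw [le_div_iff₀ (pow_pos hr.1 3)]
    linarith
  · filter_upwards [Ioo_mem_nhdsGT_of_mem (by norm_num : (0:ℝ) ∈ Ico 0 1)] with r hr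
    have h := psi2 r hr
    have h1 : (0:ℝ) < 1 - r^2 := by nlinarith [hr.1, hr.2]
    rw [div_le_div_iff₀ (pow_pos hr.1 3) h1]
    nlinarith

lemma gg_le5 : ∀ r ∈ Ioo (0:ℝ) 1, r ≤ 1/2 → ∀ t, ‖gg r t‖ ≤ 5 := by
  intro r hr hhalf t
  obtain ⟨hr0, hr1⟩ := hr
  have h1r : (0:ℝ) < 1 - r^2 := by nlinarith
  have hb := base_pos (by linarith) hr1 t
  set s : ℝ := 1 - r^2 * Real.sin t ^ 2 with hsdef
  have hs_lb : (1/4:ℝ) ≤ s := by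
    rw [hsdef]; nlinarith [Real.sin_sq_le_one t, sq_nonneg (Real.sin t)]
  have hs_ub : s ≤ 1 := by rw [hsdef]; nlinarith [sq_nonneg (r * Real.sin t)]
  -- bounds on the rpow factors
  have hhalfpow : ((1/4:ℝ)) ^ ((1/2):ℝ) = 1/2 := by
    rw [show (1/4:ℝ) = (1/2)^(2:ℕ) by norm_num, ← Real.rpow_natCast ((1/2):ℝ) 2,
      ← Real.rpow_mul (by norm_num)]
    norm_num
  have hSp : (1/2:ℝ) ≤ s ^ ((1/2):ℝ) := by
    refine le_trans (le_of_eq hhalfpow.symm) (Real.rpow_le_rpow (by norm_num) hs_lb (by norm_num))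
  have hSpos : 0 < s ^ ((1/2):ℝ) := Real.rpow_pos_of_pos hb _
  have hA : s ^ (-(1/2):ℝ) ≤ 2 := by
    rw [Real.rpow_neg hb.le]
    have h2 := mul_pos hSpos hSpos
    have : (s ^ ((1/2):ℝ))⁻¹ * (s ^ ((1/2):ℝ)) = 1 := inv_mul_cancel₀ hSpos.ne'
    nlinarith [inv_pos.mpr hSpos]
  have hApos : 0 < s ^ (-(1/2):ℝ) := Real.rpow_pos_of_pos hb _
  have hB : s ^ ((1/2):ℝ) ≤ 1 := Real.rpow_le_one hb.le hs_ub (by norm_num)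
  -- bounds on coefficients
  have hi1 := artanh_ineq1 r ⟨hr0, hr1⟩
  have hc1ub : 2 * (1-r^2) * (_root_.artanh r / r) ≤ 2 := by
    have hdd : _root_.artanh r / r ≤ 1/(1-r^2) := by
      rw [div_le_div_iff₀ hr0 h1r]; nlinarith
    have hBq : (1-r^2) * (1/(1-r^2)) = 1 := by field_simp
    nlinarith [artanh_pos r ⟨hr0, hr1⟩, div_pos (artanh_pos r ⟨hr0, hr1⟩) hr0]
  have hc1pos : 0 ≤ 2 * (1-r^2) * (_root_.artanh r / r) := by
    have := artanh_pos r ⟨hr0, hr1⟩; positivity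
  have hc2ub : (r - (1-r^2)*_root_.artanh r)/r^3 ≤ 1 := by
    rw [div_le_one (by positivity)]
    have h := psi2 r ⟨hr0, hr1⟩
    have hN : 0 ≤ r - (1-r^2)*_root_.artanh r := by linarith
    have hquarter : (3/4:ℝ) ≤ 1-r^2 := by nlinarith
    nlinarith [mul_nonneg (by linarith : (0:ℝ) ≤ 1-r^2-3/4) hN, pow_pos hr0 3]
  have hc2pos : 0 ≤ (r - (1-r^2)*_root_.artanh r)/r^3 := by
    apply div_nonneg (by linarith) (by positivity)
  have habs : ‖gg r t‖ = gg r t := by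
    rw [Real.norm_eq_abs, abs_of_pos (gg_pos ⟨hr0, hr1⟩ t)]
  rw [habs]
  unfold gg
  rw [← hsdef]
  nlinarith [mul_le_mul hc1ub hA hApos.le (by norm_num : (0:ℝ) ≤ 2),
    mul_le_mul hc2ub hB hSpos.le (by norm_num : (0:ℝ) ≤ 1),
    mul_nonneg hc1pos hApos.le, mul_nonneg hc2pos hSpos.le]

lemma tendsto_int_gg_zero :
    Tendsto (fun r => ∫ t in (0:ℝ)..(π/2), gg r t) (𝓝[>] 0) (𝓝 (4*π/3)) := by
  have hval : (∫ t in (0:ℝ)..(π/2), (8/3:ℝ)) = 4*π/3 := by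
    simp; ring
  rw [← hval]
  apply intervalIntegral.tendsto_integral_filter_of_dominated_convergence (bound := fun _ => 5)
  · filter_upwards [Ioo_mem_nhdsGT_of_mem (by norm_num : (0:ℝ) ∈ Ico 0 1)] with r hr
    exact (gg_cont (by linarith [hr.1]) hr.2).aestronglyMeasurable.restrict
  · filter_upwards [Ioo_mem_nhdsGT_of_mem (by norm_num : (0:ℝ) ∈ Ico 0 (1/2))] with r hr
    apply Eventually.of_forall
    intro t _
    exact gg_le5 r ⟨hr.1, by linarith [hr.2]⟩ hr.2.le t
  · exact intervalIntegrable_const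
  · apply Eventually.of_forall
    intro t _
    -- pointwise limit of gg r t as r → 0⁺ is 8/3
    have hbase : Tendsto (fun r : ℝ => 1 - r^2 * Real.sin t ^ 2) (𝓝[>] 0) (𝓝 1) := by
      have := Continuous.tendsto (by fun_prop : Continuous fun r:ℝ => 1 - r^2 * Real.sin t ^ 2) 0
      norm_num at this
      exact this.mono_left nhdsWithin_le_nhds
    have hA : Tendsto (fun r : ℝ => (1 - r^2 * Real.sin t ^ 2) ^ (-(1/2):ℝ)) (𝓝[>] 0) (𝓝 1) := by
      have := hbase.rpow_const (p := -(1/2)) (Or.inl one_ne_zero)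
      simpa using this
    have hB : Tendsto (fun r : ℝ => (1 - r^2 * Real.sin t ^ 2) ^ ((1/2):ℝ)) (𝓝[>] 0) (𝓝 1) := by
      have := hbase.rpow_const (p := ((1/2):ℝ)) (Or.inl one_ne_zero)
      simpa using this
    have hc1 : Tendsto (fun r : ℝ => 2 * (1-r^2) * (_root_.artanh r / r)) (𝓝[>] 0) (𝓝 2) := by
      have hpoly : Tendsto (fun r : ℝ => 2 * (1-r^2)) (𝓝[>] 0) (𝓝 2) := by
        have := Continuous.tendsto (by fun_prop : Continuous fun r:ℝ => 2*(1-r^2)) 0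
        norm_num at this
        exact this.mono_left nhdsWithin_le_nhds
      have := hpoly.mul tendsto_artanh_div
      simpa using this
    have htot := (hc1.mul hA).add (tendsto_c2.mul hB)
    norm_num at htot
    unfold gg
    convert htot using 2

lemma tendsto_int_gg_one :
    Tendsto (fun r => ∫ t in (0:ℝ)..(π/2), gg r t) (𝓝[<] 1) (𝓝 1) := by
  have hval : (∫ t in (0:ℝ)..(π/2), Real.cos t) = 1 := by simp
  have main : Tendsto (fun r => ∫ t in (0:ℝ)..(π/2), gg r t) (𝓝[<] 1)
      (𝓝 (∫ t in (0:ℝ)..(π/2), Real.cos t)) := by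
    apply intervalIntegral.tendsto_integral_filter_of_dominated_convergence (bound := gg (1/2))
    · filter_upwards [Ioo_mem_nhdsLT_of_mem (by norm_num : (1:ℝ) ∈ Ioc 0 1)] with r hr
      exact (gg_cont (by linarith [hr.1]) hr.2).aestronglyMeasurable.restrict
    · filter_upwards [Ioo_mem_nhdsLT_of_mem (by norm_num : (1:ℝ) ∈ Ioc (1/2) 1)] with r hr
      apply Eventually.of_forall
      intro t _
      have hr' : r ∈ Ioo (0:ℝ) 1 := ⟨by linarith [hr.1], hr.2⟩
      have hlt := gg_strictAntiOn t (by norm_num : (1/2:ℝ) ∈ Ioo (0:ℝ) 1) hr' hr.1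
      have hpos := gg_pos hr' t
      rw [Real.norm_eq_abs, abs_of_pos hpos]
      exact le_of_lt hlt
    · exact (gg_cont (by norm_num) (by norm_num)).intervalIntegrable 0 (π/2)
    · have hae : ∀ᵐ t : ℝ, t ∉ ({π/2} : Set ℝ) :=
        MeasureTheory.measure_eq_zero_iff_ae_notMem.mp Real.volume_singleton
      filter_upwards [hae] with t htne' htmem
      have htne : t ≠ π/2 := fun h => htne' (by simp [h])
      rw [uIoc_of_le (by positivity : (0:ℝ) ≤ π/2)] at htmem
      have ht0 : 0 < t := htmem.1
      have ht2 : t < π/2 := lt_of_le_of_ne htmem.2 htne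
      have hcos : 0 < Real.cos t := Real.cos_pos_of_mem_Ioo ⟨by linarith [pi_pos], ht2⟩
      have hcos2 : (0:ℝ) < Real.cos t ^ 2 := by positivity
      have hbase : Tendsto (fun r : ℝ => 1 - r^2 * Real.sin t ^ 2) (𝓝[<] 1) (𝓝 (Real.cos t ^ 2)) := by
        have h := Continuous.tendsto (by fun_prop : Continuous fun r:ℝ => 1 - r^2 * Real.sin t ^ 2) 1
        have hsc : (1:ℝ) - 1^2 * Real.sin t ^ 2 = Real.cos t ^ 2 := by
          nlinarith [Real.sin_sq_add_cos_sq t]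
        rw [hsc] at h
        exact h.mono_left nhdsWithin_le_nhds
      have hA : Tendsto (fun r : ℝ => (1 - r^2 * Real.sin t ^ 2) ^ (-(1/2):ℝ)) (𝓝[<] 1)
          (𝓝 ((Real.cos t ^ 2) ^ (-(1/2):ℝ))) := hbase.rpow_const (Or.inl hcos2.ne')
      have hB : Tendsto (fun r : ℝ => (1 - r^2 * Real.sin t ^ 2) ^ ((1/2):ℝ)) (𝓝[<] 1)
          (𝓝 ((Real.cos t ^ 2) ^ ((1/2):ℝ))) := hbase.rpow_const (Or.inl hcos2.ne')
      have hc1 : Tendsto (fun r : ℝ => 2 * (1-r^2) * (_root_.artanh r / r)) (𝓝[<] 1) (𝓝 0) := by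
        have hre : (fun r : ℝ => 2 * (1-r^2) * (_root_.artanh r / r))
            = fun r : ℝ => 2 * ((1-r^2) * _root_.artanh r) * (1/r) := by
          funext r; ring
        rw [hre]
        have hinv : Tendsto (fun r : ℝ => 1/r) (𝓝[<] 1) (𝓝 1) := by
          have := (continuousAt_inv₀ (x := (1:ℝ)) one_ne_zero).tendsto
          have h2 : Tendsto (fun r : ℝ => r⁻¹) (𝓝 1) (𝓝 1) := by simpa using this
          simpa [one_div] using h2.mono_left (nhdsWithin_le_nhds (s := Iio (1:ℝ)))
        have := ((tendsto_one_sub_sq_artanh.const_mul 2).mul hinv)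
        simpa using this
      have hc2 : Tendsto (fun r : ℝ => (r - (1-r^2)*_root_.artanh r)/r^3) (𝓝[<] 1) (𝓝 1) := by
        have hnum : Tendsto (fun r : ℝ => r - (1-r^2)*_root_.artanh r) (𝓝[<] 1) (𝓝 1) := by
          have hid : Tendsto (fun r : ℝ => r) (𝓝[<] 1) (𝓝 1) :=
            tendsto_id.mono_left nhdsWithin_le_nhds
          have := hid.sub tendsto_one_sub_sq_artanh
          simpa using this
        have hden : Tendsto (fun r : ℝ => r^3) (𝓝[<] 1) (𝓝 1) := by
          have := Continuous.tendsto (by fun_prop : Continuous fun r:ℝ => r^3) 1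
          norm_num at this
          exact this.mono_left nhdsWithin_le_nhds
        have := hnum.div hden (by norm_num)
        simpa [Pi.div_def] using this
      have htot := (hc1.mul hA).add (hc2.mul hB)
      have hcoshalf : (Real.cos t ^ 2) ^ ((1/2):ℝ) = Real.cos t := by
        rw [← Real.rpow_natCast (Real.cos t) 2, ← Real.rpow_mul hcos.le]
        norm_num
      rw [zero_mul, one_mul, zero_add, hcoshalf] at htot
      exact htot
  rw [hval] at main
  exact main

theorem stmt15 :
    StrictAntiOn (fun r : ℝ =>
      2 * (1 - r^2) * (_root_.artanh r / r) * ellipticK r +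
        ((r - (1 - r^2) * _root_.artanh r) / r^3) * ellipticE r) (Ioo 0 1) ∧
    Tendsto (fun r : ℝ =>
      2 * (1 - r^2) * (_root_.artanh r / r) * ellipticK r +
        ((r - (1 - r^2) * _root_.artanh r) / r^3) * ellipticE r) (𝓝[>] 0) (𝓝 (4*π/3)) ∧
    Tendsto (fun r : ℝ =>
      2 * (1 - r^2) * (_root_.artanh r / r) * ellipticK r +
        ((r - (1 - r^2) * _root_.artanh r) / r^3) * ellipticE r) (𝓝[<] 1) (𝓝 1) := by
  refine ⟨?_, ?_, ?_⟩
  · intro a ha b hb hab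
    simp only
    rw [f_eq ha, f_eq hb]
    apply intervalIntegral.integral_lt_integral_of_continuousOn_of_le_of_exists_lt
      (by positivity : (0:ℝ) < π/2)
      ((gg_cont (by linarith [hb.1]) hb.2).continuousOn)
      ((gg_cont (by linarith [ha.1]) ha.2).continuousOn)
    · intro t _
      exact (gg_strictAntiOn t ha hb hab).le
    · exact ⟨0, ⟨le_refl 0, by positivity⟩, gg_strictAntiOn 0 ha hb hab⟩
  · apply tendsto_int_gg_zero.congr'
    filter_upwards [Ioo_mem_nhdsGT_of_mem (by norm_num : (0:ℝ) ∈ Ico 0 1)] with r hr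
    exact (f_eq hr).symm
  · apply tendsto_int_gg_one.congr'
    filter_upwards [Ioo_mem_nhdsLT_of_mem (by norm_num : (1:ℝ) ∈ Ioc 0 1)] with r hr
    exact (f_eq hr).symm
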